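/- arXiv:math/0610628 — 2 statements merged into one kernel-verified Lean document; each statement's English description precedes it below -/
import Mathlib

section
/- If π is an irreducible permutation of {1,…,m} (i.e., π({1,…,k}) = {1,…,k} only for k = m), then the permutation aπ defined by aπ(j) = π(j) for j ≤ π⁻¹(m), aπ(j) = π(m) for j = π⁻¹(m)+1, and aπ(j) = π(j−1) for all other j, is also irreducible. -/
/-- A map `f` on `{0,…,m-1}` (0-based version of `{1,…,m}`) is irreducible if for every
`0 < k < m` the initial segment `{0,…,k-1}` is *not* invariant, i.e. some `j < k` has
`f j ≥ k`.  For a permutation this says `π({1,…,k}) = {1,…,k}` only for `k = m`. -/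
def RauzyIrred {m : ℕ} (f : Fin m → Fin m) : Prop :=
  ∀ k : ℕ, 0 < k → k < m → ∃ j : Fin m, (j : ℕ) < k ∧ k ≤ (f j : ℕ)

/-- The Rauzy operation `a` preserves irreducibility. -/
theorem rauzy_a_irreducible {m : ℕ} (hm : 2 ≤ m) (π : Equiv.Perm (Fin m))
    (hπ : RauzyIrred π) (f : Fin m → Fin m)
    (h1 : ∀ j : Fin m, (j : ℕ) ≤ ((π.symm ⟨m - 1, by omega⟩ : Fin m) : ℕ) → f j = π j)
    (h2 : ∀ j : Fin m, (j : ℕ) = ((π.symm ⟨m - 1, by omega⟩ : Fin m) : ℕ) + 1 →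
      f j = π ⟨m - 1, by omega⟩)
    (h3 : ∀ j : Fin m, ((π.symm ⟨m - 1, by omega⟩ : Fin m) : ℕ) + 1 < (j : ℕ) →
      f j = π ⟨(j : ℕ) - 1, lt_of_le_of_lt (Nat.sub_le _ _) j.isLt⟩) :
    RauzyIrred f := by
  intro k hk hkm
  set p : Fin m := π.symm ⟨m - 1, by omega⟩ with hp
  by_cases hcase : k ≤ (p : ℕ)
  · obtain ⟨j, hj1, hj2⟩ := hπ k hk hkm
    refine ⟨j, hj1, ?_⟩
    rw [h1 j (by omega)]
    exact hj2
  · refine ⟨p, by omega, ?_⟩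
    rw [h1 p le_rfl]
    have : π p = ⟨m - 1, by omega⟩ := Equiv.apply_symm_apply π _
    rw [this]
    simp only []
    omega
end

section
/- Let (A_n)_{n≥1} be a sequence of m×m matrices with nonnegative integer entries, each invertible over ℤ (determinant ±1), and suppose there exists k ≥ 1 such that every product A_{n+1}A_{n+2}⋯A_{n+k} of k consecutive matrices has all entries strictly positive. Then ‖A_1 A_2 ⋯ A_n‖ ≥ 2^{⌊n/k⌋ − 1} for all n ≥ k, where ‖·‖ is the sum of the entries. Consequently, there is a constant C = C(m,k) such that n / log‖A_1⋯A_n‖ ≤ C for all n ≥ 2k. -/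
section Aux

variable {m : ℕ}

private lemma list_prod_nonneg (L : List (Matrix (Fin m) (Fin m) ℤ))
    (h : ∀ B ∈ L, ∀ i j, 0 ≤ B i j) : ∀ i j, 0 ≤ L.prod i j := by
  induction L with
  | nil =>
      intro i j
      simp only [List.prod_nil, Matrix.one_apply]
      split <;> norm_num
  | cons B L ih =>
      intro i j
      simp only [List.prod_cons, Matrix.mul_apply]
      exact Finset.sum_nonneg fun l _ =>
        mul_nonneg (h B (by simp) i l) (ih (fun C hC => h C (by simp [hC])) l j)

private lemma list_prod_det_ne (L : List (Matrix (Fin m) (Fin m) ℤ))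
    (h : ∀ B ∈ L, B.det = 1 ∨ B.det = -1) : L.prod.det ≠ 0 := by
  induction L with
  | nil => simp
  | cons B L ih =>
      rw [List.prod_cons, Matrix.det_mul]
      have h1 := h B (by simp)
      have h2 := ih (fun C hC => h C (by simp [hC]))
      rcases h1 with h1 | h1 <;> simp [h1, h2]

private lemma sum_one_le (hm : 1 ≤ m) (P : Matrix (Fin m) (Fin m) ℤ)
    (hnn : ∀ i j, 0 ≤ P i j) (hne : P.det ≠ 0) :
    (1 : ℤ) ≤ ∑ i, ∑ j, P i j := by
  have hP : P ≠ 0 := by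
    rintro rfl
    haveI : Nonempty (Fin m) := ⟨⟨0, hm⟩⟩
    exact hne Matrix.det_zero
  obtain ⟨i, j, hij⟩ : ∃ i j, P i j ≠ 0 := by
    by_contra h
    push_neg at h
    exact hP (by ext i j; simp [h])
  have h1 : (1 : ℤ) ≤ P i j := lt_of_le_of_ne (hnn i j) (Ne.symm hij)
  calc (1 : ℤ) ≤ P i j := h1
    _ ≤ ∑ j, P i j := Finset.single_le_sum (fun l _ => hnn i l) (Finset.mem_univ j)
    _ ≤ ∑ i, ∑ j, P i j :=
        Finset.single_le_sum (fun l _ => Finset.sum_nonneg fun r _ => hnn l r)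
          (Finset.mem_univ i)

private lemma sum_double (hm : 2 ≤ m) (B X : Matrix (Fin m) (Fin m) ℤ)
    (hB : ∀ i j, 1 ≤ B i j) (hX : ∀ i j, 0 ≤ X i j) :
    2 * (∑ i, ∑ j, X i j) ≤ ∑ i, ∑ j, (B * X) i j := by
  have hS : (0 : ℤ) ≤ ∑ l, ∑ j, X l j :=
    Finset.sum_nonneg fun l _ => Finset.sum_nonneg fun r _ => hX l r
  have key : ∀ i j : Fin m, ∑ l, X l j ≤ (B * X) i j := by
    intro i j
    rw [Matrix.mul_apply]
    refine Finset.sum_le_sum fun l _ => ?_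
    nlinarith [hB i l, hX l j]
  calc 2 * (∑ i, ∑ j, X i j) ≤ (m : ℤ) * ∑ i, ∑ j, X i j := by
        have : (2 : ℤ) ≤ (m : ℤ) := by exact_mod_cast hm
        nlinarith
    _ = (m : ℤ) * ∑ j, ∑ l, X l j := by rw [Finset.sum_comm]
    _ = ∑ _i : Fin m, ∑ j, ∑ l, X l j := by
        rw [Finset.sum_const, Finset.card_univ, Fintype.card_fin, nsmul_eq_mul]
    _ ≤ ∑ i, ∑ j, (B * X) i j :=
        Finset.sum_le_sum fun i _ => Finset.sum_le_sum fun j _ => key i j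

end Aux

/-- If `(A_n)` are nonnegative integer matrices invertible over `ℤ` and every product of
`k` consecutive matrices is strictly positive, then the norm (sum of entries) of
`A_1⋯A_n` grows at least like `2^{⌊n/k⌋-1}`, and consequently `n / log‖A_1⋯A_n‖` is
bounded. -/
theorem norm_product_exponential_growth {m k : ℕ} (hm : 2 ≤ m) (hk : 1 ≤ k)
    (A : ℕ → Matrix (Fin m) (Fin m) ℤ)
    (hnn : ∀ n i j, 0 ≤ A n i j)
    (hdet : ∀ n, (A n).det = 1 ∨ (A n).det = -1)
    (hpos : ∀ n, ∀ i j : Fin m,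
      0 < (((List.range k).map (fun s => A (n + 1 + s))).prod) i j) :
    (∀ n, k ≤ n →
      (2 : ℤ) ^ (n / k - 1) ≤
        ∑ i, ∑ j, (((List.range n).map (fun s => A (s + 1))).prod) i j) ∧
    ∃ C : ℝ, ∀ n, 2 * k ≤ n →
      (n : ℝ) /
        Real.log ((∑ i, ∑ j, (((List.range n).map (fun s => A (s + 1))).prod) i j : ℤ)) ≤
      C := by
  -- basic facts about segment products
  have hPnn : ∀ t n i j,
      0 ≤ (((List.range n).map (fun s => A (t + 1 + s))).prod) i j := by
    intro t n i j
    exact list_prod_nonneg _ (by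
      intro B hB
      simp only [List.mem_map] at hB
      obtain ⟨s, _, rfl⟩ := hB
      exact hnn _) i j
  have hPdet : ∀ t n, (((List.range n).map (fun s => A (t + 1 + s))).prod).det ≠ 0 := by
    intro t n
    exact list_prod_det_ne _ (by
      intro B hB
      simp only [List.mem_map] at hB
      obtain ⟨s, _, rfl⟩ := hB
      exact hdet _)
  -- main induction
  have main : ∀ q t n, k * q ≤ n →
      (2 : ℤ) ^ (q - 1) ≤ ∑ i, ∑ j, (((List.range n).map (fun s => A (t + 1 + s))).prod) i j := by
    intro q
    induction q with
    | zero =>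
        intro t n _
        simpa using sum_one_le (by omega) _ (hPnn t n) (hPdet t n)
    | succ q ih =>
        intro t n hn
        have hmul : k * (q + 1) = k * q + k := by ring
        have hkn : k ≤ n := by omega
        -- split the product
        have hsplit : (List.range n).map (fun s => A (t + 1 + s)) =
            ((List.range k).map (fun s => A (t + 1 + s))) ++
            ((List.range (n - k)).map (fun s => A (t + k + 1 + s))) := by
          have h : n = k + (n - k) := by omega
          conv_lhs => rw [h, List.range_add]
          rw [List.map_append, List.map_map]
          congr 1
          apply List.map_congr_left
          intro s _
          simp only [Function.comp_apply]
          have he : t + 1 + (k + s) = t + k + 1 + s := by omega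
          rw [he]
        have hprod : (((List.range n).map (fun s => A (t + 1 + s))).prod) =
            (((List.range k).map (fun s => A (t + 1 + s))).prod) *
            (((List.range (n - k)).map (fun s => A (t + k + 1 + s))).prod) := by
          rw [hsplit, List.prod_append]
        have hB : ∀ i j, (1 : ℤ) ≤ (((List.range k).map (fun s => A (t + 1 + s))).prod) i j :=
          fun i j => (hpos t i j)
        have hdouble := sum_double hm _ _ hB (hPnn (t + k) (n - k))
        have hih : (2 : ℤ) ^ (q - 1) ≤
            ∑ i, ∑ j, (((List.range (n - k)).map (fun s => A (t + k + 1 + s))).prod) i j :=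
          ih (t + k) (n - k) (by omega)
        have hpow : (2 : ℤ) ^ (q + 1 - 1) ≤ 2 * 2 ^ (q - 1) := by
          cases q with
          | zero => norm_num
          | succ q => simp [pow_succ, mul_comm]
        rw [hprod]
        calc (2 : ℤ) ^ (q + 1 - 1) ≤ 2 * 2 ^ (q - 1) := hpow
          _ ≤ 2 * ∑ i, ∑ j, (((List.range (n - k)).map (fun s => A (t + k + 1 + s))).prod) i j := by
              linarith
          _ ≤ _ := hdouble
  have hfun : (fun s => A (0 + 1 + s)) = (fun s => A (s + 1)) := by
    funext s; rw [Nat.zero_add, Nat.add_comm]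
  have part1 : ∀ n, k ≤ n →
      (2 : ℤ) ^ (n / k - 1) ≤
        ∑ i, ∑ j, (((List.range n).map (fun s => A (s + 1))).prod) i j := by
    intro n hn
    have h0 : k * (n / k) ≤ n := by
      rw [mul_comm]; exact Nat.div_mul_le_self n k
    have := main (n / k) 0 n h0
    rwa [hfun] at this
  refine ⟨part1, ⟨4 * k / Real.log 2, ?_⟩⟩
  intro n hn
  set N : ℤ := ∑ i, ∑ j, (((List.range n).map (fun s => A (s + 1))).prod) i j with hN
  have hq2 : 2 ≤ n / k := (Nat.le_div_iff_mul_le hk).2 (by omega)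
  have hbound : (2 : ℤ) ^ (n / k - 1) ≤ N := part1 n (by omega)
  set q' : ℕ := n / k - 1 with hq'
  have hq'1 : 1 ≤ q' := by omega
  have hNR : (2 : ℝ) ^ q' ≤ (N : ℝ) := by exact_mod_cast hbound
  have hlog2 : (0 : ℝ) < Real.log 2 := Real.log_pos (by norm_num)
  have hlogN : (q' : ℝ) * Real.log 2 ≤ Real.log N := by
    calc (q' : ℝ) * Real.log 2 = Real.log ((2 : ℝ) ^ q') := (Real.log_pow 2 q').symm
      _ ≤ Real.log N := Real.log_le_log (by positivity) hNR
  have hlogNpos : (0 : ℝ) < Real.log N := by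
    calc (0 : ℝ) < Real.log 2 := hlog2
      _ ≤ (q' : ℝ) * Real.log 2 := by
          nlinarith [show (1 : ℝ) ≤ (q' : ℝ) by exact_mod_cast hq'1]
      _ ≤ Real.log N := hlogN
  rw [div_le_div_iff₀ hlogNpos hlog2]
  -- n * log 2 ≤ 4k * log N
  have hn4 : (n : ℝ) ≤ 4 * k * q' := by
    have h1 : n < k * (n / k + 1) := Nat.lt_mul_div_succ n (by omega)
    have h2 : n / k = q' + 1 := by omega
    have hkr : (1 : ℝ) ≤ (k : ℝ) := by exact_mod_cast hk
    have hq'r : (1 : ℝ) ≤ (q' : ℝ) := by exact_mod_cast hq'1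
    have h1r : (n : ℝ) < (k : ℝ) * ((q' : ℝ) + 2) := by
      have : (n : ℝ) < (k : ℝ) * ((n / k : ℕ) + 1 : ℝ) := by exact_mod_cast h1
      rw [h2] at this
      push_cast at this ⊢
      linarith
    nlinarith
  calc (n : ℝ) * Real.log 2 ≤ (4 * k * q') * Real.log 2 := by nlinarith
    _ = 4 * k * ((q' : ℝ) * Real.log 2) := by ring
    _ ≤ 4 * k * Real.log N := by
        have hk0 : (0 : ℝ) ≤ 4 * (k : ℝ) := by positivity
        nlinarith
end
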